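/- Let 𝒪_K be a complete discrete valuation ring with uniformizer π, and let R be a normal integral domain over 𝒪_K. Let X = Spec(R) and suppose the mod-π fiber X_k is irreducible. If the set of closed points of X_k that are reductions of 𝒪_{K'}-points of X for finite unramified extensions K'/K is Zariski dense in X_k, then X_k is generically reduced, i.e., the valuation of π at the generic point of (X_k)_red is 1. -/

import Mathlib

/-- A witness that the prime `𝔮` of `R` (a closed point of the special fiber) is the
reduction of an `𝒪_{K'}`-point of `X = Spf R` for a finite unramified extension `K'/K`:
a section `φ : R → 𝒪'` into a discrete valuation ring `𝒪'` finite over `𝒪 = 𝒪_K`,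
compatible with the structure map, in which `π` remains a uniformizer (unramifiedness),
and whose reduction cuts out `𝔮`. -/
structure UnramifiedSection (O : Type) [CommRing O] (R : Type) [CommRing R] [Algebra O R]
    (π : O) (𝔮 : Ideal R) where
  /-- The valuation ring of the unramified extension. -/
  O' : Type
  [commRing : CommRing O']
  [isDomain : IsDomain O']
  [dvr : IsDiscreteValuationRing O']
  /-- The extension of valuation rings. -/
  ι : O →+* O'
  /-- The point of `X`. -/
  φ : R →+* O'
  compat : φ.comp (algebraMap O R) = ι
  /-- `𝒪'` is finite over `𝒪`. -/
  finite : ι.Finite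
  /-- Unramifiedness: `π` remains a uniformizer of `𝒪'`. -/
  unramified : Irreducible (ι π)
  /-- The reduction of the point is the closed point `𝔮`. -/
  reduction : 𝔮 = (IsLocalRing.maximalIdeal O').comap φ

/-- **Density of unramified points forces generic reducedness of the special fiber.**
Let `𝒪_K` be a complete discrete valuation ring with uniformizer `π`, and `R` a normal
integral domain over `𝒪_K` with `X = Spec R`.  Assume the mod-`π` fiber `X_k` is
irreducible with generic point `𝔭` (i.e. `𝔭` is contained in every prime containing `π`).
If the set of closed points of `X_k` that are reductions of `𝒪_{K'}`-points of `X` for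
finite unramified extensions `K'/K` is Zariski dense in `X_k` (it meets every nonempty
basic open `D(f) ∩ X_k`), then `X_k` is generically reduced: the image of `π` in the
discrete valuation ring `R_𝔭` is a uniformizer (has valuation `1`). -/
theorem generically_reduced_of_dense_unramified_points
    (O : Type) [CommRing O] [IsDomain O] [IsDiscreteValuationRing O]
    [IsAdicComplete (IsLocalRing.maximalIdeal O) O]
    (π : O) (hπ : Irreducible π)
    (R : Type) [CommRing R] [IsDomain R] [IsIntegrallyClosed R] [Algebra O R]
    (𝔭 : Ideal R) [𝔭.IsPrime]
    [IsDomain (Localization.AtPrime 𝔭)]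
    [IsDiscreteValuationRing (Localization.AtPrime 𝔭)]
    (hπ𝔭 : algebraMap O R π ∈ 𝔭)
    (hgen : ∀ 𝔮 : Ideal R, 𝔮.IsPrime → algebraMap O R π ∈ 𝔮 → 𝔭 ≤ 𝔮)
    (hdense : ∀ f : R, f ∉ 𝔭 → ∃ 𝔮 : Ideal R, 𝔮.IsPrime ∧ algebraMap O R π ∈ 𝔮 ∧ f ∉ 𝔮 ∧
      Nonempty (UnramifiedSection O R π 𝔮)) :
    Irreducible (algebraMap R (Localization.AtPrime 𝔭) (algebraMap O R π)) := by
  set p : R := algebraMap O R π with hp_def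
  set f : R →+* Localization.AtPrime 𝔭 := algebraMap R (Localization.AtPrime 𝔭) with hf_def
  have hcompl : 𝔭.primeCompl ≤ nonZeroDivisors R := by
    intro x hx
    exact mem_nonZeroDivisors_of_ne_zero (fun h => hx (by rw [h]; exact 𝔭.zero_mem))
  have hinj : Function.Injective f := IsLocalization.injective _ hcompl
  -- p ≠ 0
  have hp0 : p ≠ 0 := by
    obtain ⟨𝔮₀, -, -, -, ⟨S⟩⟩ :=
      hdense 1 (fun h => (Ideal.IsPrime.ne_top ‹𝔭.IsPrime›) (Ideal.eq_top_iff_one 𝔭 |>.mpr h))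
    intro h
    letI := S.commRing; letI := S.isDomain; letI := S.dvr
    have heq : S.ι π = S.φ p := by rw [← S.compat]; rfl
    have hu := S.unramified
    exact hu.ne_zero (by rw [heq, h, map_zero])
  -- the image is in the maximal ideal
  have hmem : f p ∈ IsLocalRing.maximalIdeal (Localization.AtPrime 𝔭) := by
    rw [← Localization.AtPrime.map_eq_maximalIdeal]
    exact Ideal.mem_map_of_mem f hπ𝔭
  have hne : f p ≠ 0 := fun h => hp0 (hinj (by rw [h, map_zero]))
  -- the image is not in the square of the maximal ideal
  have hsq : f p ∉ (IsLocalRing.maximalIdeal (Localization.AtPrime 𝔭)) ^ 2 := by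
    intro h
    rw [← Localization.AtPrime.map_eq_maximalIdeal, ← Ideal.map_pow] at h
    obtain ⟨⟨a, s⟩, hs⟩ := (IsLocalization.mem_map_algebraMap_iff 𝔭.primeCompl _).mp h
    have hps : p * (s : R) = (a : R) := by
      apply hinj; rw [map_mul]; exact hs
    obtain ⟨𝔮, h𝔮, hp𝔮, hs𝔮, ⟨S⟩⟩ := hdense s s.2
    letI := S.commRing; letI := S.isDomain; letI := S.dvr
    have h𝔭𝔮 : 𝔭 ≤ 𝔮 := hgen 𝔮 h𝔮 hp𝔮
    -- φ p is irreducible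
    have hφp : Irreducible (S.φ p) := by
      have heq : S.ι π = S.φ p := by rw [← S.compat]; rfl
      have hu := S.unramified
      rwa [heq] at hu
    -- φ s is a unit
    have hφs : IsUnit (S.φ s) := by
      by_contra hu
      exact hs𝔮 (S.reduction ▸ Ideal.mem_comap.mpr ((IsLocalRing.mem_maximalIdeal _).mpr hu))
    -- φ a ∈ m'^2
    have hφa : S.φ a ∈ (IsLocalRing.maximalIdeal S.O') ^ 2 := by
      have hmap : Ideal.map S.φ 𝔭 ≤ IsLocalRing.maximalIdeal S.O' := by
        rw [Ideal.map_le_iff_le_comap]; exact S.reduction ▸ h𝔭𝔮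
      have : S.φ a ∈ Ideal.map S.φ (𝔭 ^ 2) := Ideal.mem_map_of_mem S.φ a.2
      rw [Ideal.map_pow] at this
      exact (Ideal.pow_right_mono hmap 2) this
    -- but φ a = φ p * φ s is irreducible times a unit, hence irreducible
    have hirr : Irreducible (S.φ a) := by
      rw [← hps, map_mul]
      exact (irreducible_mul_isUnit hφs).mpr hφp
    -- an irreducible element of a DVR is not in m'^2
    rw [hirr.maximalIdeal_eq, Ideal.span_singleton_pow, Ideal.mem_span_singleton] at hφa
    obtain ⟨c, hc⟩ := hφa
    have hz : S.φ a * (1 - S.φ a * c) = 0 := by linear_combination hc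
    rcases mul_eq_zero.mp hz with h0 | h0
    · exact hirr.ne_zero h0
    · exact hirr.not_isUnit (IsUnit.of_mul_eq_one c (by
        have := sub_eq_zero.mp h0; linear_combination -this))
  -- conclude: a nonzero non-unit of a DVR not in m² is irreducible
  obtain ⟨ϖ, hϖ⟩ := IsDiscreteValuationRing.exists_irreducible (Localization.AtPrime 𝔭)
  obtain ⟨n, u, hxu⟩ := IsDiscreteValuationRing.eq_unit_mul_pow_irreducible hne hϖ
  match n with
  | 0 =>
    exfalso
    rw [hxu, pow_zero, mul_one] at hmem
    exact (IsLocalRing.mem_maximalIdeal _).mp hmem u.isUnit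
  | 1 =>
    rw [hxu, pow_one]
    exact (Associated.irreducible ⟨u, mul_comm ϖ (u : Localization.AtPrime 𝔭)⟩ hϖ)
  | (m + 2) =>
    exfalso
    apply hsq
    rw [hϖ.maximalIdeal_eq, Ideal.span_singleton_pow, Ideal.mem_span_singleton, hxu]
    exact ⟨u * ϖ ^ m, by ring⟩
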